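/- Let N ≥ 1 and let ψ, φ : ℝ^N → ℝ^N be C² maps that are ℤ^N-periodic (ψ(x+k) = ψ(x) and φ(x+k) = φ(x) for all k ∈ ℤ^N). Assume the transversality condition: there is no x ∈ ℝ^N with det Dψ(x) = 0 and D(det Dψ)(x) = 0 simultaneously (i.e. 0 is a regular value of x ↦ det Dψ(x)). Then for every β ∈ (0,1) there exist constants C_β > 0 and L₀ > 0 such that for all L ≥ L₀, the Lebesgue measure of the set {x ∈ [0,1]^N : |det(Dψ(x) + L^{-1}·Dφ(x))| ≤ L^{−(1−β)}} is at most C_β·L^{−(1−β)}. -/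

import Mathlib

open MeasureTheory

lemma insertNth_eq_affine {n : ℕ} (i : Fin (n+1)) (t : ℝ) (y : Fin n → ℝ) :
    Fin.insertNth (α := fun _ => ℝ) i t y
      = Fin.insertNth (α := fun _ => ℝ) i 0 y + t • (Pi.single i 1 : Fin (n+1) → ℝ) := by
  funext j
  revert j
  rw [Fin.forall_iff_succAbove i]
  constructor
  · simp
  · intro k
    simp [Pi.single_eq_of_ne (Fin.succAbove_ne i k)]

lemma slab {n : ℕ} (g : (Fin (n+1) → ℝ) → ℝ) (hg : ContDiff ℝ 1 g)
    (x₀ : Fin (n+1) → ℝ) (r : ℝ) (hr : 0 < r) (i : Fin (n+1)) (c ε : ℝ) (hc : 0 < c)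
    (hε : 0 ≤ ε) (hder : ∀ y ∈ Metric.ball x₀ r, c ≤ fderiv ℝ g y (Pi.single i 1)) :
    volume {y | y ∈ Metric.ball x₀ r ∧ |g y| ≤ ε} ≤
      ENNReal.ofReal ((2*r)^n * (4*ε/c)) := by
  set e := MeasurableEquiv.piFinSuccAbove (fun _ : Fin (n+1) => ℝ) i with he
  set A : Set (Fin (n+1) → ℝ) := {y | y ∈ Metric.ball x₀ r ∧ |g y| ≤ ε} with hA
  have hAm : MeasurableSet A := by
    apply MeasurableSet.inter Metric.isOpen_ball.measurableSet
    exact measurableSet_le (hg.continuous.abs.measurable) measurable_const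
  have mp := volume_preserving_piFinSuccAbove (fun _ : Fin (n+1) => ℝ) i
  have hpre : MeasurableSet (e.symm ⁻¹' A) := e.symm.measurable hAm
  have hvol : volume A = (volume.prod volume) (e.symm ⁻¹' A) := by
    have := (mp.symm e).measure_preimage hAm.nullMeasurableSet
    rw [← Measure.volume_eq_prod]
    exact this.symm
  rw [hvol, Measure.prod_apply_symm hpre]
  have hsAb : ∀ (t : ℝ) (y : Fin n → ℝ) (j : Fin n),
      e.symm (t, y) (i.succAbove j) = y j :=
    fun t y j => Fin.insertNth_apply_succAbove (α := fun _ => ℝ) i t y j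
  have hsec : ∀ y : Fin n → ℝ,
      volume ((fun t => (t, y)) ⁻¹' (e.symm ⁻¹' A)) ≤
        (Metric.closedBall (x₀ ∘ i.succAbove) r).indicator
          (fun _ => ENNReal.ofReal (4*ε/c)) y := by
    intro y
    by_cases hy : y ∈ Metric.closedBall (x₀ ∘ i.succAbove) r
    · rw [Set.indicator_of_mem hy]
      set S : Set ℝ := (fun t => (t, y)) ⁻¹' (e.symm ⁻¹' A) with hS
      rcases Set.eq_empty_or_nonempty S with hSe | ⟨t₁, ht₁⟩
      · simp [hSe]
      · set a : Fin (n+1) → ℝ := Fin.insertNth (α := fun _ => ℝ) i 0 y with ha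
        set v : Fin (n+1) → ℝ := Pi.single i 1 with hv
        have hz : ∀ t : ℝ, e.symm (t, y) = a + t • v := fun t => insertNth_eq_affine i t y
        set u : ℝ → ℝ := fun t => g (a + t • v) with hu
        have hdiff : Differentiable ℝ u :=
          (hg.differentiable one_ne_zero).comp ((differentiable_id.smul_const v).const_add a)
        have hderiv : ∀ t : ℝ, HasDerivAt u (fderiv ℝ g (a + t • v) v) t := by
          intro t
          have h1 : HasDerivAt (fun t : ℝ => a + t • v) v t := by
            simpa using ((hasDerivAt_id t).smul_const v).const_add a
          exact ((hg.differentiable one_ne_zero _).hasFDerivAt).comp_hasDerivAt t h1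
        set D : Set ℝ := (fun t : ℝ => a + t • v) ⁻¹' Metric.ball x₀ r with hD
        have hDo : IsOpen D := Metric.isOpen_ball.preimage (by fun_prop)
        have hDc : Convex ℝ D := by
          intro t₂ h2 t₃ h3 p q hp hq hpq
          show a + (p • t₂ + q • t₃) • v ∈ Metric.ball x₀ r
          have hmod : p • (a + t₂ • v) + q • (a + t₃ • v)
              = (p + q) • a + (p • t₂ + q • t₃) • v := by simp only [smul_eq_mul]; module
          have heq : a + (p • t₂ + q • t₃) • v = p • (a + t₂ • v) + q • (a + t₃ • v) := by
            rw [hmod, hpq, one_smul]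
          rw [heq]
          exact (convex_ball x₀ r) h2 h3 hp hq hpq
        have hmemS : ∀ t ∈ S, t ∈ D ∧ |u t| ≤ ε := by
          intro t ht
          obtain ⟨hb, hgle⟩ := ht
          rw [hz t] at hb hgle
          exact ⟨hb, hgle⟩
        have hbound : ∀ t₂ t₃, t₂ ∈ S → t₃ ∈ S → t₂ ≤ t₃ → t₃ - t₂ ≤ 2*ε/c := by
          intro t₂ t₃ h2 h3 hle
          obtain ⟨h2D, h2e⟩ := hmemS _ h2
          obtain ⟨h3D, h3e⟩ := hmemS _ h3
          have key := hDc.mul_sub_le_image_sub_of_le_deriv hdiff.continuous.continuousOn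
            hdiff.differentiableOn (C := c) ?_ t₂ h2D t₃ h3D hle
          · have h2' := abs_le.1 h2e
            have h3' := abs_le.1 h3e
            rw [le_div_iff₀ hc]
            nlinarith
          · intro t ht
            rw [hDo.interior_eq] at ht
            rw [(hderiv t).deriv]
            exact hder _ ht
        have hsub : S ⊆ Set.Icc (t₁ - 2*ε/c) (t₁ + 2*ε/c) := by
          intro t ht
          have hnn : (0:ℝ) ≤ 2*ε/c := div_nonneg (by linarith) hc.le
          rcases le_total t t₁ with h | h
          · have := hbound t t₁ ht ht₁ h
            exact ⟨by linarith, by linarith⟩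
          · have := hbound t₁ t ht₁ ht h
            exact ⟨by linarith, by linarith⟩
        calc volume S ≤ volume (Set.Icc (t₁ - 2*ε/c) (t₁ + 2*ε/c)) := measure_mono hsub
          _ = ENNReal.ofReal (4*ε/c) := by rw [Real.volume_Icc]; ring_nf
    · rw [Set.indicator_of_notMem hy]
      have hemp : (fun t : ℝ => (t, y)) ⁻¹' (e.symm ⁻¹' A) = ∅ := by
        ext t
        simp only [Set.mem_preimage, Set.mem_empty_iff_false, iff_false]
        rintro ⟨hb, -⟩
        apply hy
        rw [Metric.mem_closedBall, dist_pi_le_iff hr.le]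
        intro j
        calc dist (y j) ((x₀ ∘ i.succAbove) j)
            = dist (e.symm (t,y) (i.succAbove j)) (x₀ (i.succAbove j)) := by rw [hsAb t y j]; rfl
          _ ≤ dist (e.symm (t,y)) x₀ := dist_le_pi_dist _ _ _
          _ ≤ r := (Metric.mem_ball.1 hb).le
      rw [hemp]; simp
  calc ∫⁻ y, volume ((fun t => (t, y)) ⁻¹' (e.symm ⁻¹' A)) ∂volume
      ≤ ∫⁻ y, (Metric.closedBall (x₀ ∘ i.succAbove) r).indicator
          (fun _ => ENNReal.ofReal (4*ε/c)) y ∂volume := lintegral_mono hsec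
    _ = ENNReal.ofReal (4*ε/c) * volume (Metric.closedBall (x₀ ∘ i.succAbove) r) := by
        rw [lintegral_indicator measurableSet_closedBall]; simp [mul_comm]
    _ = ENNReal.ofReal ((2*r)^n * (4*ε/c)) := by
        rw [Real.volume_pi_closedBall _ hr.le]
        rw [← ENNReal.ofReal_mul (by positivity)]
        simp [mul_comm, Fintype.card_fin]

-- coordinate lower bound
lemma coord_bound {n : ℕ} (ℓ : (Fin (n+1) → ℝ) →L[ℝ] ℝ) {m : ℝ} (hm : m ≤ ‖ℓ‖) :
    ∃ i, m / (n+1) ≤ |ℓ (Pi.single i 1)| := by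
  by_contra hcon
  push_neg at hcon
  have hsum : ‖ℓ‖ ≤ ∑ i, |ℓ (Pi.single i 1)| := by
    apply ContinuousLinearMap.opNorm_le_bound _ (Finset.sum_nonneg fun i _ => abs_nonneg _)
    intro v
    have hv : ℓ v = ∑ i, v i * ℓ (Pi.single i 1) := by
      conv_lhs => rw [← Finset.univ_sum_single v]
      rw [map_sum]
      congr 1; funext i
      have : Pi.single i (v i) = v i • (Pi.single i 1 : Fin (n+1) → ℝ) := by
        rw [← Pi.single_smul]; simp
      rw [this, ℓ.map_smul, smul_eq_mul]
    rw [hv, Real.norm_eq_abs]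
    calc |∑ i, v i * ℓ (Pi.single i 1)| ≤ ∑ i, |v i * ℓ (Pi.single i 1)| :=
          Finset.abs_sum_le_sum_abs _ _
      _ ≤ ∑ i, ‖v‖ * |ℓ (Pi.single i 1)| := by
          apply Finset.sum_le_sum; intro i _
          rw [abs_mul]
          exact mul_le_mul_of_nonneg_right (norm_le_pi_norm v i) (abs_nonneg _)
      _ = (∑ i, |ℓ (Pi.single i 1)|) * ‖v‖ := by rw [Finset.sum_mul]; congr 1; funext i; ring
  have hlt : ∑ i, |ℓ (Pi.single i 1)| < ∑ _i : Fin (n+1), m / (n+1) :=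
    Finset.sum_lt_sum_of_nonempty Finset.univ_nonempty fun i _ => hcon i
  rw [Finset.sum_const, Finset.card_univ, Fintype.card_fin, nsmul_eq_mul] at hlt
  have hcast : ((n+1 : ℕ) : ℝ) * (m / (n+1)) = m := by
    push_cast; field_simp
  rw [hcast] at hlt
  linarith

lemma keybound {n : ℕ} (g : (Fin (n+1) → ℝ) → ℝ) (hg : ContDiff ℝ 1 g)
    (htrans : ∀ x, g x = 0 → fderiv ℝ g x ≠ 0) :
    ∃ C : ℝ, 0 < C ∧ ∃ δ : ℝ, 0 < δ ∧ ∀ ε : ℝ, 0 < ε → ε ≤ δ →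
      volume {x | (∀ i, x i ∈ Set.Icc (0:ℝ) 1) ∧ |g x| ≤ ε} ≤ ENNReal.ofReal (C * ε) := by
  classical
  set K : Set (Fin (n+1) → ℝ) := {x | ∀ i, x i ∈ Set.Icc (0:ℝ) 1} with hK
  have hKeq : K = Set.pi Set.univ (fun _ => Set.Icc (0:ℝ) 1) := by
    ext x
    constructor
    · intro h i _; exact h i
    · intro h i; exact h i (Set.mem_univ i)
  have hKc : IsCompact K := by rw [hKeq]; exact isCompact_univ_pi fun _ => isCompact_Icc
  have hKne : K.Nonempty := ⟨fun _ => 0, fun i => ⟨le_rfl, zero_le_one⟩⟩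
  have hgc : Continuous g := hg.continuous
  have hfc : Continuous (fderiv ℝ g) := hg.continuous_fderiv one_ne_zero
  set Φ : (Fin (n+1) → ℝ) → ℝ := fun x => max |g x| ‖fderiv ℝ g x‖ with hΦ
  have hΦc : Continuous Φ := (hgc.abs).max hfc.norm
  obtain ⟨x₀, hx₀K, hmin⟩ := hKc.exists_isMinOn hKne hΦc.continuousOn
  set m : ℝ := Φ x₀ with hm
  have hm0 : 0 < m := by
    rcases eq_or_ne (g x₀) 0 with h0 | h0
    · have := htrans x₀ h0
      have : 0 < ‖fderiv ℝ g x₀‖ := norm_pos_iff.2 this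
      exact lt_of_lt_of_le this (le_max_right _ _)
    · exact lt_of_lt_of_le (abs_pos.2 h0) (le_max_left _ _)
  have hmK : ∀ x ∈ K, m ≤ Φ x := fun x hx => hmin hx
  set S : Set (Fin (n+1) → ℝ) := {x | x ∈ K ∧ |g x| ≤ m/2} with hS
  have hScl : IsClosed S := (hKc.isClosed.inter (isClosed_le (hgc.abs) continuous_const))
  have hScpt : IsCompact S := hKc.of_isClosed_subset hScl (fun x hx => hx.1)
  set c₀ : ℝ := m / (2*(n+1)) with hc₀
  have hc₀0 : 0 < c₀ := by positivity
  -- local structure near each point of S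
  have hloc : ∀ x : S, ∃ r : ℝ, 0 < r ∧ ∃ i : Fin (n+1),
      (∀ y ∈ Metric.ball (x : Fin (n+1) → ℝ) r, c₀ ≤ fderiv ℝ g y (Pi.single i 1)) ∨
      (∀ y ∈ Metric.ball (x : Fin (n+1) → ℝ) r, c₀ ≤ fderiv ℝ (fun z => -g z) y (Pi.single i 1)) := by
    rintro ⟨x, hxK, hxg⟩
    have hnorm : m ≤ ‖fderiv ℝ g x‖ := by
      by_contra hcon
      push_neg at hcon
      have h1 : |g x| < m := lt_of_le_of_lt hxg (half_lt_self hm0)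
      have h2 : max |g x| ‖fderiv ℝ g x‖ < m := max_lt h1 hcon
      exact absurd (hmK x hxK) (not_le.2 h2)
    obtain ⟨i, hi⟩ := coord_bound (fderiv ℝ g x) hnorm
    have hcont : Continuous fun y => fderiv ℝ g y (Pi.single i 1) :=
      (ContinuousLinearMap.apply ℝ ℝ (Pi.single i 1)).continuous.comp hfc
    have hgt : c₀ < m / (n+1) := by
      rw [hc₀]
      rw [div_lt_div_iff₀ (by positivity) (by positivity)]
      nlinarith
    rcases le_or_gt 0 (fderiv ℝ g x (Pi.single i 1)) with hpos | hneg
    · have hval : c₀ < fderiv ℝ g x (Pi.single i 1) := by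
        have := abs_of_nonneg hpos ▸ hi
        linarith
      have hopen : IsOpen {y | c₀ < fderiv ℝ g y (Pi.single i 1)} :=
        isOpen_lt continuous_const hcont
      obtain ⟨r, hr0, hrb⟩ := Metric.isOpen_iff.1 hopen x hval
      exact ⟨r, hr0, i, Or.inl fun y hy => (hrb hy).le⟩
    · have hval : c₀ < fderiv ℝ (fun z => -g z) x (Pi.single i 1) := by
        rw [fderiv_fun_neg]
        simp only [ContinuousLinearMap.neg_apply]
        have : |fderiv ℝ g x (Pi.single i 1)| = -(fderiv ℝ g x (Pi.single i 1)) :=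
          abs_of_neg hneg
        rw [this] at hi
        linarith
      have hcont' : Continuous fun y => fderiv ℝ (fun z => -g z) y (Pi.single i 1) := by
        have : (fun y => fderiv ℝ (fun z => -g z) y (Pi.single i 1))
            = fun y => -(fderiv ℝ g y (Pi.single i 1)) := by
          funext y; rw [fderiv_fun_neg]; simp
        rw [this]; exact hcont.neg
      have hopen : IsOpen {y | c₀ < fderiv ℝ (fun z => -g z) y (Pi.single i 1)} :=
        isOpen_lt continuous_const hcont'
      obtain ⟨r, hr0, hrb⟩ := Metric.isOpen_iff.1 hopen x hval
      exact ⟨r, hr0, i, Or.inr fun y hy => (hrb hy).le⟩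
  choose r hr0 idx hbr using hloc
  have hcover : S ⊆ ⋃ z : S, Metric.ball (z : Fin (n+1) → ℝ) (r z) := by
    intro x hx
    exact Set.mem_iUnion.2 ⟨⟨x, hx⟩, Metric.mem_ball_self (hr0 ⟨x, hx⟩)⟩
  obtain ⟨T, hT⟩ := hScpt.elim_finite_subcover
    (fun z : S => Metric.ball (z : Fin (n+1) → ℝ) (r z)) (fun z => Metric.isOpen_ball) hcover
  set C₁ : ℝ := ∑ z ∈ T, (2 * r z)^n * (4 / c₀) with hC₁
  have hC₁0 : 0 ≤ C₁ := Finset.sum_nonneg fun z _ => by have := hr0 z; positivity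
  refine ⟨C₁ + 1, by linarith, m/2, by linarith, ?_⟩
  intro ε hε0 hεδ
  have hsubS : {x | (∀ i, x i ∈ Set.Icc (0:ℝ) 1) ∧ |g x| ≤ ε} ⊆
      ⋃ z ∈ T, {y | y ∈ Metric.ball (z : Fin (n+1) → ℝ) (r z) ∧ |g y| ≤ ε} := by
    intro x hx
    have hxS : x ∈ S := ⟨hx.1, le_trans hx.2 hεδ⟩
    obtain ⟨z, hzT, hzb⟩ := Set.mem_iUnion₂.1 (hT hxS)
    exact Set.mem_iUnion₂.2 ⟨z, hzT, hzb, hx.2⟩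
  calc volume {x | (∀ i, x i ∈ Set.Icc (0:ℝ) 1) ∧ |g x| ≤ ε}
      ≤ volume (⋃ z ∈ T, {y | y ∈ Metric.ball (z : Fin (n+1) → ℝ) (r z) ∧ |g y| ≤ ε}) :=
        measure_mono hsubS
    _ ≤ ∑ z ∈ T, volume {y | y ∈ Metric.ball (z : Fin (n+1) → ℝ) (r z) ∧ |g y| ≤ ε} :=
        measure_biUnion_finset_le T _
    _ ≤ ∑ z ∈ T, ENNReal.ofReal ((2 * r z)^n * (4 * ε / c₀)) := by
        apply Finset.sum_le_sum
        intro z hz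
        rcases hbr z with hb | hb
        · exact slab g hg _ _ (hr0 z) (idx z) c₀ ε hc₀0 hε0.le hb
        · have heq : {y | y ∈ Metric.ball (z : Fin (n+1) → ℝ) (r z) ∧ |g y| ≤ ε}
              = {y | y ∈ Metric.ball (z : Fin (n+1) → ℝ) (r z) ∧ |(fun w => -g w) y| ≤ ε} := by
            ext y; simp [abs_neg]
          rw [heq]
          exact slab (fun w => -g w) hg.neg _ _ (hr0 z) (idx z) c₀ ε hc₀0 hε0.le hb
    _ = ENNReal.ofReal (∑ z ∈ T, (2 * r z)^n * (4 * ε / c₀)) := by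
        rw [ENNReal.ofReal_sum_of_nonneg]
        intro z _; have := hr0 z; positivity
    _ ≤ ENNReal.ofReal ((C₁ + 1) * ε) := by
        apply ENNReal.ofReal_le_ofReal
        have : ∑ z ∈ T, (2 * r z)^n * (4 * ε / c₀) = C₁ * ε := by
          rw [hC₁, Finset.sum_mul]
          congr 1; funext z; ring
        rw [this]
        nlinarith

lemma contDiff_det' {E : Type*} [NormedAddCommGroup E] [NormedSpace ℝ E] {k : ℕ}
    {A : E → Matrix (Fin k) (Fin k) ℝ} (h : ∀ i j, ContDiff ℝ 1 fun x => A x i j) :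
    ContDiff ℝ 1 fun x => (A x).det := by
  have : (fun x => (A x).det)
      = fun x => ∑ σ : Equiv.Perm (Fin k), ((Equiv.Perm.sign σ : ℤ) : ℝ) * ∏ i, A x (σ i) i := by
    funext x; rw [Matrix.det_apply']
  rw [this]
  exact ContDiff.sum fun σ _ => contDiff_const.mul (contDiff_prod fun i _ => h _ _)


/-- Transversality criterion for (F2): if `ψ, φ : ℝ^N → ℝ^N` are `C²`,
`ℤ^N`-periodic, and `0` is a regular value of `x ↦ det Dψ(x)`, then for every `β ∈ (0,1)`
there are `C_β > 0` and `L₀ > 0` such that for all `L ≥ L₀`,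
`Leb{x ∈ [0,1]^N : |det(Dψ(x) + L⁻¹ Dφ(x))| ≤ L^(-(1-β))} ≤ C_β L^(-(1-β))`. -/
theorem statement10 (N : ℕ) (hN : 1 ≤ N) (ψ φ : (Fin N → ℝ) → Fin N → ℝ)
    (hψ : ContDiff ℝ 2 ψ) (hφ : ContDiff ℝ 2 φ)
    (hψper : ∀ (x : Fin N → ℝ) (k : Fin N → ℤ), ψ (x + fun i => (k i : ℝ)) = ψ x)
    (hφper : ∀ (x : Fin N → ℝ) (k : Fin N → ℤ), φ (x + fun i => (k i : ℝ)) = φ x)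
    (Jψ Jφ : (Fin N → ℝ) → Matrix (Fin N) (Fin N) ℝ)
    (hJψ : ∀ (x : Fin N → ℝ) (i j : Fin N),
      Jψ x i j = fderiv ℝ (fun y => ψ y i) x (Pi.single j 1))
    (hJφ : ∀ (x : Fin N → ℝ) (i j : Fin N),
      Jφ x i j = fderiv ℝ (fun y => φ y i) x (Pi.single j 1))
    (htrans : ∀ x : Fin N → ℝ, (Jψ x).det = 0 → fderiv ℝ (fun y => (Jψ y).det) x ≠ 0) :
    ∀ β : ℝ, β ∈ Set.Ioo (0 : ℝ) 1 →
      ∃ C : ℝ, 0 < C ∧ ∃ L₀ : ℝ, 0 < L₀ ∧ ∀ L : ℝ, L₀ ≤ L →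
        volume {x : Fin N → ℝ |
            (∀ i, x i ∈ Set.Icc (0 : ℝ) 1) ∧
              |(Jψ x + L⁻¹ • Jφ x).det| ≤ L ^ (-(1 - β))} ≤
          ENNReal.ofReal (C * L ^ (-(1 - β))) := by
  obtain ⟨n, rfl⟩ : ∃ n, N = n + 1 := ⟨N - 1, (Nat.succ_pred_eq_of_pos hN).symm⟩
  intro β hβ
  obtain ⟨hβ0, hβ1⟩ := hβ
  have hβ' : 0 < 1 - β := by linarith
  -- smoothness of entries
  have hJψC : ∀ i j, ContDiff ℝ 1 fun x => Jψ x i j := by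
    intro i j
    have heq : (fun x => Jψ x i j) = fun x => fderiv ℝ (fun y => ψ y i) x (Pi.single j 1) :=
      funext fun x => hJψ x i j
    rw [heq]
    have h1 : ContDiff ℝ 2 fun y => ψ y i :=
      (ContinuousLinearMap.proj (R := ℝ) (φ := fun _ : Fin (n+1) => ℝ) i).contDiff.comp hψ
    exact (ContinuousLinearMap.apply ℝ ℝ (Pi.single j 1)).contDiff.comp
      (h1.fderiv_right (m := 1) (by norm_num))
  have hJφC : ∀ i j, ContDiff ℝ 1 fun x => Jφ x i j := by
    intro i j
    have heq : (fun x => Jφ x i j) = fun x => fderiv ℝ (fun y => φ y i) x (Pi.single j 1) :=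
      funext fun x => hJφ x i j
    rw [heq]
    have h1 : ContDiff ℝ 2 fun y => φ y i :=
      (ContinuousLinearMap.proj (R := ℝ) (φ := fun _ : Fin (n+1) => ℝ) i).contDiff.comp hφ
    exact (ContinuousLinearMap.apply ℝ ℝ (Pi.single j 1)).contDiff.comp
      (h1.fderiv_right (m := 1) (by norm_num))
  have hgC : ContDiff ℝ 1 fun x => (Jψ x).det := contDiff_det' hJψC
  obtain ⟨C₁, hC₁, δ, hδ, hkey⟩ := keybound (fun x => (Jψ x).det) hgC htrans
  -- uniform Lipschitz bound in t
  set G : ℝ × ((Fin (n+1) → ℝ)) → ℝ := fun p => (Jψ p.2 + p.1 • Jφ p.2).det with hGdef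
  have hGC : ContDiff ℝ 1 G := by
    apply contDiff_det'
    intro i j
    have heq : (fun p : ℝ × (Fin (n+1) → ℝ) => (Jψ p.2 + p.1 • Jφ p.2) i j)
        = fun p => Jψ p.2 i j + p.1 * Jφ p.2 i j := by
      funext p; simp [Matrix.add_apply, Matrix.smul_apply, smul_eq_mul]
    rw [heq]
    exact ((hJψC i j).comp contDiff_snd).add (contDiff_fst.mul ((hJφC i j).comp contDiff_snd))
  obtain ⟨M₀, hM₀⟩ := (isCompact_closedBall (0 : ℝ × (Fin (n+1) → ℝ)) 2).exists_bound_of_continuousOn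
    (hGC.continuous_fderiv one_ne_zero).continuousOn
  set M : ℝ := max M₀ 1 with hMdef
  have hM1 : (1:ℝ) ≤ M := le_max_right _ _
  have hM0 : (0:ℝ) < M := lt_of_lt_of_le one_pos hM1
  have hLip : ∀ x : Fin (n+1) → ℝ, (∀ i, x i ∈ Set.Icc (0:ℝ) 1) →
      ∀ t : ℝ, 0 ≤ t → t ≤ 1 → |G (t, x) - G (0, x)| ≤ M * t := by
    intro x hx t ht0 ht1
    have hx1 : ‖x‖ ≤ 1 := by
      rw [pi_norm_le_iff_of_nonneg zero_le_one]
      intro i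
      rw [Real.norm_eq_abs, abs_le]
      obtain ⟨h1, h2⟩ := hx i
      exact ⟨by linarith, h2⟩
    have hmem : ∀ s : ℝ, 0 ≤ s → s ≤ 1 →
        (s, x) ∈ Metric.closedBall (0 : ℝ × (Fin (n+1) → ℝ)) 2 := by
      intro s h0 h1
      rw [Metric.mem_closedBall, dist_zero_right, Prod.norm_def]
      apply max_le
      · rw [Real.norm_eq_abs, abs_of_nonneg h0]; linarith
      · linarith
    have hest := Convex.norm_image_sub_le_of_norm_fderiv_le (f := G) (C := M) (𝕜 := ℝ)
      (s := Metric.closedBall (0 : ℝ × (Fin (n+1) → ℝ)) 2)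
      (fun p _ => (hGC.differentiable one_ne_zero).differentiableAt)
      (fun p hp => le_trans (hM₀ p hp) (le_max_left _ _))
      (convex_closedBall _ _) (hmem 0 le_rfl zero_le_one) (hmem t ht0 ht1)
    have hnorm : ‖(t, x) - ((0 : ℝ), x)‖ = t := by
      have : (t, x) - ((0 : ℝ), x) = (t, (0 : Fin (n+1) → ℝ)) := by
        simp [Prod.ext_iff]
      rw [this, Prod.norm_def]
      simp only [Real.norm_eq_abs, norm_zero, abs_of_nonneg ht0]
      exact max_eq_left ht0
    rw [hnorm] at hest
    exact hest
  -- choose L₀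
  set B : ℝ := max 1 (2/δ) with hBdef
  have hB1 : (1:ℝ) ≤ B := le_max_left _ _
  set L₀ : ℝ := max (max 1 (B ^ (1/(1-β)))) (M ^ (1/β)) with hL₀def
  have hL₀1 : (1:ℝ) ≤ L₀ := le_trans (le_max_left 1 _) (le_max_left _ _)
  refine ⟨2 * C₁, by linarith, L₀, lt_of_lt_of_le one_pos hL₀1, ?_⟩
  intro L hL
  have hL1 : (1:ℝ) ≤ L := le_trans hL₀1 hL
  have hL0 : (0:ℝ) < L := lt_of_lt_of_le one_pos hL1
  have hrpos : 0 < L ^ (-(1-β)) := Real.rpow_pos_of_pos hL0 _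
  -- (b): M * L⁻¹ ≤ L ^ (-(1-β))
  have hMLb : M * L⁻¹ ≤ L ^ (-(1-β)) := by
    have hBL : M ^ (1/β) ≤ L := le_trans (le_max_right _ _) hL
    have hMle : M ≤ L ^ β := by
      calc M = (M ^ (1/β)) ^ β := by
            rw [← Real.rpow_mul hM0.le, one_div_mul_cancel (ne_of_gt hβ0), Real.rpow_one]
          _ ≤ L ^ β := Real.rpow_le_rpow (Real.rpow_nonneg hM0.le _) hBL hβ0.le
    have hsplit : L ^ (-(1-β)) = L ^ β * L⁻¹ := by
      rw [show -(1-β) = β + (-1) by ring, Real.rpow_add hL0, Real.rpow_neg_one]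
    rw [hsplit]
    exact mul_le_mul_of_nonneg_right hMle (inv_nonneg.2 hL0.le)
  -- (c): 2 * L ^ (-(1-β)) ≤ δ
  have h2L : 2 * L ^ (-(1-β)) ≤ δ := by
    have hBL : B ^ (1/(1-β)) ≤ L := le_trans (le_max_right _ _) (le_trans (le_max_left _ _) hL)
    have hLB : 2/δ ≤ L ^ (1-β) := by
      have : B ≤ L ^ (1-β) := by
        calc B = (B ^ (1/(1-β))) ^ (1-β) := by
              rw [← Real.rpow_mul (by linarith : (0:ℝ) ≤ B), one_div_mul_cancel hβ'.ne',
                Real.rpow_one]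
          _ ≤ L ^ (1-β) := Real.rpow_le_rpow (Real.rpow_nonneg (by linarith) _) hBL hβ'.le
      exact le_trans (le_max_right _ _) this
    have h2δ : (0:ℝ) < 2/δ := by positivity
    have hinv : (L ^ (1-β))⁻¹ ≤ (2/δ)⁻¹ := by
      apply inv_anti₀ h2δ hLB
    rw [Real.rpow_neg hL0.le]
    rw [inv_div] at hinv
    calc 2 * (L ^ (1-β))⁻¹ ≤ 2 * (δ/2) := by linarith
      _ = δ := by ring
  -- the subset inclusion
  have hsub : {x : Fin (n+1) → ℝ | (∀ i, x i ∈ Set.Icc (0:ℝ) 1) ∧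
        |(Jψ x + L⁻¹ • Jφ x).det| ≤ L ^ (-(1-β))} ⊆
      {x | (∀ i, x i ∈ Set.Icc (0:ℝ) 1) ∧ |(Jψ x).det| ≤ 2 * L ^ (-(1-β))} := by
    rintro x ⟨hx1, hx2⟩
    refine ⟨hx1, ?_⟩
    have hG0 : G (0, x) = (Jψ x).det := by
      show (Jψ x + (0:ℝ) • Jφ x).det = (Jψ x).det
      rw [zero_smul, add_zero]
    have hGL : G (L⁻¹, x) = (Jψ x + L⁻¹ • Jφ x).det := rfl
    have hLinv0 : (0:ℝ) ≤ L⁻¹ := inv_nonneg.2 hL0.le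
    have hLinv1 : L⁻¹ ≤ 1 := by
      rw [inv_le_one_iff₀]; right; exact hL1
    have hlip := hLip x hx1 L⁻¹ hLinv0 hLinv1
    have htri : |(Jψ x).det| - |(Jψ x + L⁻¹ • Jφ x).det| ≤
        |(Jψ x).det - (Jψ x + L⁻¹ • Jφ x).det| := abs_sub_abs_le_abs_sub _ _
    have habs : |(Jψ x).det - (Jψ x + L⁻¹ • Jφ x).det| = |G (L⁻¹, x) - G (0, x)| := by
      rw [hGL, hG0, abs_sub_comm]
    rw [habs] at htri
    have hML : M * L⁻¹ ≤ L ^ (-(1-β)) := hMLb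
    linarith
  calc volume {x : Fin (n+1) → ℝ | (∀ i, x i ∈ Set.Icc (0:ℝ) 1) ∧
        |(Jψ x + L⁻¹ • Jφ x).det| ≤ L ^ (-(1-β))}
      ≤ volume {x | (∀ i, x i ∈ Set.Icc (0:ℝ) 1) ∧ |(Jψ x).det| ≤ 2 * L ^ (-(1-β))} :=
        measure_mono hsub
    _ ≤ ENNReal.ofReal (C₁ * (2 * L ^ (-(1-β)))) := hkey _ (by linarith) h2L
    _ = ENNReal.ofReal (2 * C₁ * L ^ (-(1-β))) := by ring_nf
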